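/- arXiv:1409.4508 — 3 statements merged into one kernel-verified Lean document; each statement's English description precedes it below -/
import Mathlib

section
/- Let d ≥ 1, n ≥ 2, and let c_1, …, c_n be points of d-dimensional Euclidean space satisfying ‖c_j − c_k‖ ≥ 2 for all 1 ≤ j < k ≤ n. Then 2(n − 1) ≤ Σ_{i=1}^n ‖c_i‖². -/
open MeasureTheory Metric

/-- If `c 1, …, c n` (`n ≥ 2`) are points of `d`-dimensional Euclidean space (`d ≥ 1`) with
pairwise distances at least `2`, then `2(n-1) ≤ ∑ ‖c i‖²`. -/
theorem blichfeldt_sum_norm_sq (d n : ℕ) (hd : 1 ≤ d) (hn : 2 ≤ n)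
    (c : Fin n → EuclideanSpace ℝ (Fin d))
    (hc : ∀ j k : Fin n, j < k → 2 ≤ ‖c j - c k‖) :
    2 * ((n : ℝ) - 1) ≤ ∑ i : Fin n, ‖c i‖ ^ 2 := by
  have key : ∀ j k : Fin n, j ≠ k → (4:ℝ) ≤ ‖c j - c k‖ ^ 2 := by
    intro j k h
    rcases h.lt_or_gt with h | h
    · nlinarith [hc j k h, norm_nonneg (c j - c k)]
    · have h2 := hc k j h
      rw [← norm_sub_rev] at h2
      nlinarith [norm_nonneg (c j - c k)]
  set T := ∑ i : Fin n, ‖c i‖ ^ 2 with hT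
  have expand : ∑ j : Fin n, ∑ k : Fin n, ‖c j - c k‖ ^ 2
      = 2 * n * T - 2 * ‖∑ i : Fin n, c i‖ ^ 2 := by
    have h1 : ∀ j k : Fin n, ‖c j - c k‖ ^ 2
        = ‖c j‖ ^ 2 + ‖c k‖ ^ 2 - 2 * inner ℝ (c j) (c k) := by
      intro j k
      have := @norm_sub_sq_real (EuclideanSpace ℝ (Fin d)) _ _ (c j) (c k)
      linarith
    have h2 : ‖∑ i : Fin n, c i‖ ^ 2
        = ∑ j : Fin n, ∑ k : Fin n, (inner ℝ (c j) (c k) : ℝ) := by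
      rw [← real_inner_self_eq_norm_sq, sum_inner]
      simp [inner_sum]
    simp only [h1, Finset.sum_sub_distrib, Finset.sum_add_distrib, Finset.sum_const,
      Finset.card_univ, Fintype.card_fin, nsmul_eq_mul, ← Finset.mul_sum, h2]
    ring
  have lower : 4 * (n : ℝ) * ((n : ℝ) - 1) ≤ ∑ j : Fin n, ∑ k : Fin n, ‖c j - c k‖ ^ 2 := by
    have : ∀ j : Fin n, 4 * ((n : ℝ) - 1) ≤ ∑ k : Fin n, ‖c j - c k‖ ^ 2 := by
      intro j
      have : ∑ k : Fin n, (if j = k then (0:ℝ) else 4) ≤ ∑ k : Fin n, ‖c j - c k‖ ^ 2 := by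
        apply Finset.sum_le_sum
        intro k _
        by_cases h : j = k
        · simp [h]
        · simpa [h] using key j k h
      calc 4 * ((n : ℝ) - 1) = ∑ k : Fin n, (if j = k then (0:ℝ) else 4) := by
            rw [Finset.sum_ite]
            simp [Finset.filter_eq, Finset.filter_ne]
            have h1 : 1 ≤ n := Nat.one_le_of_lt hn
            have : ((n - 1 : ℕ) : ℝ) = (n : ℝ) - 1 := by
              push_cast [h1]; ring
            rw [this]; ring
        _ ≤ _ := this
    calc 4 * (n : ℝ) * ((n : ℝ) - 1) = ∑ _j : Fin n, 4 * ((n : ℝ) - 1) := by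
          simp [Finset.sum_const, Finset.card_univ]; ring
      _ ≤ _ := Finset.sum_le_sum fun j _ => this j
  have hnorm : (0:ℝ) ≤ ‖∑ i : Fin n, c i‖ ^ 2 := sq_nonneg _
  have hnpos : (0:ℝ) < n := by positivity
  nlinarith [lower, expand, hnorm]
end

section
/- Let d ≥ 1, λ > 0, set ℓ = 1 + λ, and let c_1, …, c_n be points of d-dimensional Euclidean space with ‖c_j − c_k‖ ≥ 2 for all j ≠ k. Then for every point y ∈ E^d, the sum over those indices i with ‖y − c_i‖ ≤ ℓ of the quantities (1 − ‖y − c_i‖²/2) is at most 1. Equivalently, Σ_{i=1}^n ρ_λ(y − c_i) ≤ 1, where ρ_λ is the Blichfeldt gauge function. -/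
open MeasureTheory Metric

/-- The Blichfeldt gauge function `ρ_λ`. -/
noncomputable def blichfeldtGauge (d : ℕ) (lam : ℝ) (x : EuclideanSpace ℝ (Fin d)) : ℝ :=
  if ‖x‖ ≤ 1 + lam then 1 - ‖x‖ ^ 2 / 2 else 0

lemma blichfeldt_core {E : Type*} [NormedAddCommGroup E] [InnerProductSpace ℝ E]
    {n : ℕ} (S : Finset (Fin n)) (x : Fin n → E)
    (hx : ∀ i ∈ S, ∀ j ∈ S, i ≠ j → 2 ≤ ‖x i - x j‖) :
    ∑ i ∈ S, (1 - ‖x i‖ ^ 2 / 2) ≤ 1 := by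
  rcases S.eq_empty_or_nonempty with rfl | ⟨i0, hi0⟩
  · simp
  set m : ℕ := S.card with hm
  have hm1 : 1 ≤ m := Finset.card_pos.mpr ⟨i0, hi0⟩
  -- key identity
  have key : ∑ i ∈ S, ∑ j ∈ S, ‖x i - x j‖ ^ 2
      = 2 * m * ∑ i ∈ S, ‖x i‖ ^ 2 - 2 * ‖∑ i ∈ S, x i‖ ^ 2 := by
    have expand : ∀ i j, ‖x i - x j‖ ^ 2
        = ‖x i‖ ^ 2 - 2 * inner ℝ (x i) (x j) + ‖x j‖ ^ 2 := by
      intro i j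
      rw [@norm_sub_sq_real]
    calc ∑ i ∈ S, ∑ j ∈ S, ‖x i - x j‖ ^ 2
        = ∑ i ∈ S, ∑ j ∈ S, (‖x i‖ ^ 2 - 2 * inner ℝ (x i) (x j) + ‖x j‖ ^ 2) := by
          simp_rw [expand]
      _ = 2 * m * ∑ i ∈ S, ‖x i‖ ^ 2
          - 2 * inner ℝ (∑ i ∈ S, x i) (∑ j ∈ S, x j) := by
          simp only [Finset.sum_add_distrib, Finset.sum_sub_distrib, Finset.sum_const,
            nsmul_eq_mul, ← Finset.mul_sum]
          rw [inner_sum]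
          simp_rw [sum_inner]
          rw [← hm, Finset.sum_comm]
          ring
      _ = 2 * m * ∑ i ∈ S, ‖x i‖ ^ 2 - 2 * ‖∑ i ∈ S, x i‖ ^ 2 := by
          rw [real_inner_self_eq_norm_sq]
  -- lower bound on the double sum
  have lb : 4 * (m : ℝ) * ((m : ℝ) - 1) ≤ ∑ i ∈ S, ∑ j ∈ S, ‖x i - x j‖ ^ 2 := by
    have h1 : ∀ i ∈ S, 4 * ((m : ℝ) - 1) ≤ ∑ j ∈ S, ‖x i - x j‖ ^ 2 := by
      intro i hi
      calc 4 * ((m : ℝ) - 1) = ∑ _j ∈ S.erase i, (4 : ℝ) := by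
            rw [Finset.sum_const, Finset.card_erase_of_mem hi, nsmul_eq_mul]
            have : ((m - 1 : ℕ) : ℝ) = (m : ℝ) - 1 := by
              push_cast [Nat.cast_sub hm1]; ring
            rw [this]; ring
        _ ≤ ∑ j ∈ S.erase i, ‖x i - x j‖ ^ 2 := by
            apply Finset.sum_le_sum
            intro j hj
            have hji := Finset.ne_of_mem_erase hj
            have h2 := hx i hi j (Finset.mem_of_mem_erase hj) (Ne.symm hji)
            nlinarith [norm_nonneg (x i - x j)]
        _ ≤ ∑ j ∈ S, ‖x i - x j‖ ^ 2 := by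
            apply Finset.sum_le_sum_of_subset_of_nonneg (Finset.erase_subset i S)
            intro j _ _
            positivity
    calc 4 * (m : ℝ) * ((m : ℝ) - 1) = ∑ _i ∈ S, 4 * ((m : ℝ) - 1) := by
          rw [Finset.sum_const, nsmul_eq_mul]; ring
      _ ≤ ∑ i ∈ S, ∑ j ∈ S, ‖x i - x j‖ ^ 2 := Finset.sum_le_sum h1
  have hnormsq : (0 : ℝ) ≤ ‖∑ i ∈ S, x i‖ ^ 2 := by positivity
  have hmpos : (0 : ℝ) < m := by exact_mod_cast hm1
  -- deduce ∑ ‖x i‖² ≥ 2 (m - 1)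
  have hsum : 2 * ((m : ℝ) - 1) ≤ ∑ i ∈ S, ‖x i‖ ^ 2 := by
    nlinarith [key, lb, hnormsq]
  have : ∑ i ∈ S, (1 - ‖x i‖ ^ 2 / 2) = (m : ℝ) - (∑ i ∈ S, ‖x i‖ ^ 2) / 2 := by
    rw [Finset.sum_sub_distrib, Finset.sum_const, nsmul_eq_mul, ← Finset.sum_div]
    ring
  rw [this]
  linarith

/-- For a packing of unit balls with centers `c 1, …, c n` in `d`-dimensional Euclidean space
(`d ≥ 1`) and any point `y`, we have `∑ i, ρ_λ (y - c i) ≤ 1`, where `ρ_λ` is the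
Blichfeldt gauge function and `λ > 0`. -/
theorem blichfeldt_gauge_sum_le_one (d n : ℕ) (hd : 1 ≤ d) (lam : ℝ) (hlam : 0 < lam)
    (c : Fin n → EuclideanSpace ℝ (Fin d))
    (hc : ∀ j k : Fin n, j ≠ k → 2 ≤ ‖c j - c k‖)
    (y : EuclideanSpace ℝ (Fin d)) :
    ∑ i : Fin n, blichfeldtGauge d lam (y - c i) ≤ 1 := by
  have hrw : ∑ i : Fin n, blichfeldtGauge d lam (y - c i)
      = ∑ i ∈ Finset.univ.filter (fun i => ‖y - c i‖ ≤ 1 + lam), (1 - ‖y - c i‖ ^ 2 / 2) := by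
    rw [Finset.sum_filter]
    simp [blichfeldtGauge]
  rw [hrw]
  apply blichfeldt_core _ (fun i => y - c i)
  intro i _ j _ hij
  have : (y - c i) - (y - c j) = c j - c i := by abel
  rw [this]
  exact hc j i (Ne.symm hij)
end

section
/- Let d ≥ 2, let 0 < λ < 2/√3 − 1, and let c_1, …, c_n be points of E^d with ‖c_j − c_k‖ ≥ 2 for all j ≠ k. Then no point of E^d belongs to three of the closed balls of radius 1 + λ centered at the points c_i; that is, there is no point y ∈ E^d and distinct indices i, j, k with ‖y − c_i‖ ≤ 1 + λ, ‖y − c_j‖ ≤ 1 + λ and ‖y − c_k‖ ≤ 1 + λ. -/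
open MeasureTheory Metric

/-- For `d ≥ 2`, `0 < λ < 2/√3 - 1`, and a packing of unit balls in `E^d` with centers
`c 1, …, c n`, no point of `E^d` belongs to three of the closed balls of radius `1 + λ`
centered at the points `c i`. -/
theorem no_triple_intersection (d : ℕ) (hd : 2 ≤ d) (lam : ℝ) (hlam0 : 0 < lam)
    (hlam1 : lam < 2 / Real.sqrt 3 - 1)
    (n : ℕ) (c : Fin n → EuclideanSpace ℝ (Fin d))
    (hc : ∀ j k : Fin n, j ≠ k → 2 ≤ ‖c j - c k‖) :
    ¬ ∃ (y : EuclideanSpace ℝ (Fin d)) (i j k : Fin n),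
      i ≠ j ∧ i ≠ k ∧ j ≠ k ∧
      ‖y - c i‖ ≤ 1 + lam ∧ ‖y - c j‖ ≤ 1 + lam ∧ ‖y - c k‖ ≤ 1 + lam := by
  rintro ⟨y, i, j, k, hij, hik, hjk, hi, hj, hk⟩
  obtain ⟨r, hrdef⟩ : ∃ r : ℝ, r = 1 + lam := ⟨_, rfl⟩
  rw [← hrdef] at hi hj hk
  have hr0 : 0 < r := by rw [hrdef]; linarith
  have hs0 : (0:ℝ) < Real.sqrt 3 := by positivity
  have hs : Real.sqrt 3 ^ 2 = 3 := Real.sq_sqrt (by norm_num)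
  have hrs : r * Real.sqrt 3 < 2 := by
    have h1 : r < 2 / Real.sqrt 3 := by rw [hrdef]; linarith
    calc r * Real.sqrt 3 < (2 / Real.sqrt 3) * Real.sqrt 3 :=
          mul_lt_mul_of_pos_right h1 hs0
      _ = 2 := by field_simp
  have h4 : (r * Real.sqrt 3) ^ 2 < 4 := by nlinarith [mul_pos hr0 hs0]
  have hr2 : r ^ 2 < 4 / 3 := by rw [mul_pow, hs] at h4; linarith
  obtain ⟨u, hu⟩ : ∃ u, u = y - c i := ⟨_, rfl⟩
  obtain ⟨v, hv⟩ : ∃ v, v = y - c j := ⟨_, rfl⟩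
  obtain ⟨w, hw⟩ : ∃ w, w = y - c k := ⟨_, rfl⟩
  rw [← hu] at hi; rw [← hv] at hj; rw [← hw] at hk
  have huv : u - v = c j - c i := by rw [hu, hv]; abel
  have huw : u - w = c k - c i := by rw [hu, hw]; abel
  have hvw : v - w = c k - c j := by rw [hv, hw]; abel
  have d1 : (2:ℝ) ≤ ‖u - v‖ := by rw [huv, norm_sub_rev]; exact hc i j hij
  have d2 : (2:ℝ) ≤ ‖u - w‖ := by rw [huw, norm_sub_rev]; exact hc i k hik
  have d3 : (2:ℝ) ≤ ‖v - w‖ := by rw [hvw, norm_sub_rev]; exact hc j k hjk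
  clear hu hv hw huv huw hvw hc hlam1 hlam0 hrdef
  -- square bounds
  have sq_le : ∀ z : EuclideanSpace ℝ (Fin d), ‖z‖ ≤ r → ‖z‖ ^ 2 ≤ r ^ 2 :=
    fun z hz => pow_le_pow_left₀ (norm_nonneg z) hz 2
  have sq_ge : ∀ z : EuclideanSpace ℝ (Fin d), (2:ℝ) ≤ ‖z‖ → (4:ℝ) ≤ ‖z‖ ^ 2 := by
    intro z hz
    have := pow_le_pow_left₀ (by norm_num : (0:ℝ) ≤ 2) hz 2
    norm_num at this
    linarith
  have nu := sq_le u hi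
  have nv := sq_le v hj
  have nw := sq_le w hk
  have m1 := sq_ge _ d1
  have m2 := sq_ge _ d2
  have m3 := sq_ge _ d3
  have e1 : ‖u - v‖ ^ 2 = ‖u‖ ^ 2 - 2 * inner ℝ u v + ‖v‖ ^ 2 := norm_sub_sq_real u v
  have e2 : ‖u - w‖ ^ 2 = ‖u‖ ^ 2 - 2 * inner ℝ u w + ‖w‖ ^ 2 := norm_sub_sq_real u w
  have e3 : ‖v - w‖ ^ 2 = ‖v‖ ^ 2 - 2 * inner ℝ v w + ‖w‖ ^ 2 := norm_sub_sq_real v w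
  have iuv : (inner ℝ u v : ℝ) ≤ r ^ 2 - 2 := by linarith
  have iuw : (inner ℝ u w : ℝ) ≤ r ^ 2 - 2 := by linarith
  have ivw : (inner ℝ v w : ℝ) ≤ r ^ 2 - 2 := by linarith
  have hnn : (0:ℝ) ≤ inner ℝ (u + v + w) (u + v + w) := real_inner_self_nonneg
  have hexp : (inner ℝ (u + v + w) (u + v + w) : ℝ)
      = ‖u‖ ^ 2 + ‖v‖ ^ 2 + ‖w‖ ^ 2
        + 2 * inner ℝ u v + 2 * inner ℝ u w + 2 * inner ℝ v w := by
    simp only [inner_add_left, inner_add_right, real_inner_self_eq_norm_sq]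
    rw [real_inner_comm v u, real_inner_comm w u, real_inner_comm w v]
    ring
  rw [hexp] at hnn
  have nu0 : (0:ℝ) ≤ ‖u‖ ^ 2 := sq_nonneg _
  linarith
end
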